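/- arXiv:1809.09819 — 2 statements merged into one kernel-verified Lean document; each statement's English description precedes it below -/
import Mathlib

section
/- Let f : {-1,1}^n → {-1,1} and let μ be a finitely supported probability distribution over functions T : {-1,1}^n → {-1,1} such that every T in the support of μ has Fourier spectral norm Σ_S |T̂(S)| ≤ 2^r, and such that E_x E_{T∼μ}[f(x)·T(x)] ≥ 1/3. Then max_{S ⊆ [n]} |f̂(S)| ≥ 2^{−r}/3, and consequently the Fourier min-entropy satisfies H_∞(f̂²) ≤ 2(r + log₂ 3). -/
open Finset

/-- The real value (`1` or `-1`) encoded by a Boolean. -/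
noncomputable def bsgn (b : Bool) : ℝ := if b then 1 else -1

/-- The character `χ_S(x) = ∏_{i ∈ S} x_i` on the hypercube `{-1,1}^n`. -/
noncomputable def chi {n : ℕ} (S : Finset (Fin n)) (x : Fin n → Bool) : ℝ :=
  ∏ i ∈ S, bsgn (x i)

/-- The Fourier coefficient `f̂(S) = E_x [f(x)·χ_S(x)]`. -/
noncomputable def fCoeff {n : ℕ} (f : (Fin n → Bool) → ℝ) (S : Finset (Fin n)) : ℝ :=
  (∑ x : Fin n → Bool, f x * chi S x) / 2 ^ n

/-- The Fourier (Shannon) entropy `H(f̂²) = Σ_S f̂(S)² log₂(1/f̂(S)²)`. -/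
noncomputable def fEntropy {n : ℕ} (f : (Fin n → Bool) → ℝ) : ℝ :=
  ∑ S : Finset (Fin n), (fCoeff f S) ^ 2 * Real.logb 2 (1 / (fCoeff f S) ^ 2)

/-- The Fourier min-entropy `H_∞(f̂²) = min_{S : f̂(S) ≠ 0} log₂(1/f̂(S)²)`. -/
noncomputable def fMinEntropy {n : ℕ} (f : (Fin n → Bool) → ℝ) : ℝ :=
  sInf {y : ℝ | ∃ S : Finset (Fin n),
    fCoeff f S ≠ 0 ∧ y = Real.logb 2 (1 / (fCoeff f S) ^ 2)}

/-- The total influence `Inf(f) = Σ_S |S|·f̂(S)²`. -/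
noncomputable def totalInf {n : ℕ} (f : (Fin n → Bool) → ℝ) : ℝ :=
  ∑ S : Finset (Fin n), (S.card : ℝ) * (fCoeff f S) ^ 2

section auxForStmt2
lemma abs_bsgn (b : Bool) : |bsgn b| = 1 := by cases b <;> simp [bsgn]

lemma abs_chi {n : ℕ} (S : Finset (Fin n)) (x : Fin n → Bool) : |chi S x| = 1 := by
  rw [chi, Finset.abs_prod]
  simp [abs_bsgn]

lemma chi_orth {n : ℕ} (x y : Fin n → Bool) :
    ∑ S : Finset (Fin n), chi S x * chi S y = if x = y then (2:ℝ) ^ n else 0 := by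
  have h1 : ∀ S : Finset (Fin n), chi S x * chi S y
      = ∏ i ∈ S, (bsgn (x i) * bsgn (y i)) := by
    intro S; rw [chi, chi, Finset.prod_mul_distrib]
  simp_rw [h1]
  have h2 : ∑ S : Finset (Fin n), ∏ i ∈ S, (bsgn (x i) * bsgn (y i))
      = ∏ i : Fin n, (bsgn (x i) * bsgn (y i) + 1) := by
    rw [Finset.prod_add]
    rw [← Finset.powerset_univ]
    refine Finset.sum_congr rfl ?_
    intro t _
    simp
  rw [h2]
  by_cases hxy : x = y
  · subst hxy
    simp only [if_pos rfl]
    have : ∀ i : Fin n, bsgn (x i) * bsgn (x i) + 1 = 2 := by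
      intro i; cases x i <;> norm_num [bsgn]
    rw [Finset.prod_congr rfl (fun i _ => this i)]
    simp
  · rw [if_neg hxy]
    obtain ⟨i, hi⟩ : ∃ i, x i ≠ y i := by
      by_contra h; push_neg at h; exact hxy (funext h)
    refine Finset.prod_eq_zero (Finset.mem_univ i) ?_
    cases hx : x i <;> cases hy : y i <;> simp_all [bsgn] <;> norm_num

lemma fourier_inversion {n : ℕ} (g : (Fin n → Bool) → ℝ) (x : Fin n → Bool) :
    ∑ S : Finset (Fin n), fCoeff g S * chi S x = g x := by
  simp_rw [fCoeff, div_mul_eq_mul_div, Finset.sum_mul]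
  rw [← Finset.sum_div, Finset.sum_comm]
  have : ∀ y : Fin n → Bool, ∑ S : Finset (Fin n), g y * chi S y * chi S x
      = g y * (if y = x then (2:ℝ)^n else 0) := by
    intro y
    rw [← chi_orth y x, Finset.mul_sum]
    simp [mul_assoc]
  simp_rw [this, mul_ite, mul_zero]
  rw [Finset.sum_ite_eq' Finset.univ x (fun y => g y * (2:ℝ)^n)]
  simp [mul_div_assoc]

lemma plancherel {n : ℕ} (f g : (Fin n → Bool) → ℝ) :
    (∑ x : Fin n → Bool, f x * g x) / 2 ^ n
      = ∑ S : Finset (Fin n), fCoeff f S * fCoeff g S := by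
  have : ∀ x, f x * g x = ∑ S : Finset (Fin n), fCoeff g S * (f x * chi S x) := by
    intro x
    conv_lhs => rw [← fourier_inversion g x]
    rw [mul_comm, Finset.sum_mul]
    exact Finset.sum_congr rfl fun S _ => by ring
  simp_rw [this]
  rw [Finset.sum_comm, Finset.sum_div]
  refine Finset.sum_congr rfl fun S _ => ?_
  rw [← Finset.mul_sum]
  simp only [fCoeff]
  ring

end auxForStmt2

/-- `f` is a Boolean (`±1`-valued) function. -/
def IsBooleanFunc {n : ℕ} (f : (Fin n → Bool) → ℝ) : Prop := ∀ x, f x = 1 ∨ f x = -1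

/-- If `μ` is a finitely supported probability distribution (here: weights
`w j` on functions `T j`, `j` ranging over a finite index set) over `±1`-valued functions,
each of Fourier spectral norm at most `2^r`, and `E_x E_{T∼μ}[f(x)·T(x)] ≥ 1/3`, then
`max_S |f̂(S)| ≥ 2^{-r}/3`, and consequently `H_∞(f̂²) ≤ 2(r + log₂ 3)`. -/
theorem stmt2 {n m : ℕ} (f : (Fin n → Bool) → ℝ) (hf : IsBooleanFunc f)
    (r : ℝ) (w : Fin m → ℝ) (T : Fin m → ((Fin n → Bool) → ℝ))
    (hw0 : ∀ j, 0 ≤ w j) (hw1 : ∑ j, w j = 1)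
    (hTbool : ∀ j, IsBooleanFunc (T j))
    (hTnorm : ∀ j, ∑ S : Finset (Fin n), |fCoeff (T j) S| ≤ (2 : ℝ) ^ r)
    (hcorr : (1 : ℝ) / 3 ≤ ∑ j, w j * ((∑ x : Fin n → Bool, f x * T j x) / 2 ^ n)) :
    (2 : ℝ) ^ (-r) / 3 ≤
      Finset.univ.sup' Finset.univ_nonempty (fun S : Finset (Fin n) => |fCoeff f S|) ∧
    fMinEntropy f ≤ 2 * (r + Real.logb 2 3) := by
  set M := Finset.univ.sup' Finset.univ_nonempty
      (fun S : Finset (Fin n) => |fCoeff f S|) with hM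
  have hMle : ∀ S : Finset (Fin n), |fCoeff f S| ≤ M :=
    fun S => Finset.le_sup' (fun S : Finset (Fin n) => |fCoeff f S|) (Finset.mem_univ S)
  have hM0 : (0:ℝ) ≤ M := le_trans (abs_nonneg _) (hMle ∅)
  have h2r : (0:ℝ) < (2:ℝ) ^ r := Real.rpow_pos_of_pos two_pos r
  have hbound : ∀ j, (∑ x : Fin n → Bool, f x * T j x) / 2 ^ n ≤ M * 2 ^ r := by
    intro j
    rw [plancherel]
    calc ∑ S : Finset (Fin n), fCoeff f S * fCoeff (T j) S
        ≤ ∑ S : Finset (Fin n), |fCoeff f S| * |fCoeff (T j) S| :=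
          Finset.sum_le_sum fun S _ => (le_abs_self _).trans (le_of_eq (abs_mul _ _))
      _ ≤ ∑ S : Finset (Fin n), M * |fCoeff (T j) S| :=
          Finset.sum_le_sum fun S _ =>
            mul_le_mul_of_nonneg_right (hMle S) (abs_nonneg _)
      _ = M * ∑ S : Finset (Fin n), |fCoeff (T j) S| := (Finset.mul_sum _ _ _).symm
      _ ≤ M * 2 ^ r := mul_le_mul_of_nonneg_left (hTnorm j) hM0
  have h13 : (1:ℝ)/3 ≤ M * 2 ^ r := by
    refine hcorr.trans ?_
    calc ∑ j, w j * ((∑ x : Fin n → Bool, f x * T j x) / 2 ^ n)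
        ≤ ∑ j, w j * (M * 2 ^ r) :=
          Finset.sum_le_sum fun j _ =>
            mul_le_mul_of_nonneg_left (hbound j) (hw0 j)
      _ = M * 2 ^ r := by rw [← Finset.sum_mul, hw1, one_mul]
  have hinv : (2:ℝ) ^ (-r) * 2 ^ r = 1 := by
    rw [← Real.rpow_add two_pos]; simp
  have part1 : (2:ℝ) ^ (-r) / 3 ≤ M := by nlinarith [h2r, h13, hinv]
  refine ⟨part1, ?_⟩
  -- part 2
  obtain ⟨S₀, -, hS₀⟩ := Finset.exists_mem_eq_sup' Finset.univ_nonempty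
    (fun S : Finset (Fin n) => |fCoeff f S|)
  have hS₀' : ((2:ℝ) ^ (-r)) / 3 ≤ |fCoeff f S₀| := hS₀ ▸ part1
  have hq : (0:ℝ) < (2:ℝ) ^ (-r) / 3 := by positivity
  have hpos : 0 < |fCoeff f S₀| := lt_of_lt_of_le hq hS₀'
  have hne : fCoeff f S₀ ≠ 0 := abs_pos.mp hpos
  have habs1 : ∀ S : Finset (Fin n), |fCoeff f S| ≤ 1 := by
    intro S
    rw [fCoeff, abs_div, abs_of_nonneg (by positivity : (0:ℝ) ≤ 2 ^ n)]
    rw [div_le_one (by positivity)]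
    calc |∑ x : Fin n → Bool, f x * chi S x|
        ≤ ∑ x : Fin n → Bool, |f x * chi S x| := Finset.abs_sum_le_sum_abs _ _
      _ = ∑ _x : Fin n → Bool, (1:ℝ) := by
          refine Finset.sum_congr rfl fun x _ => ?_
          rw [abs_mul, abs_chi, mul_one]
          rcases hf x with h | h <;> rw [h] <;> norm_num
      _ = 2 ^ n := by
          rw [Finset.sum_const, Finset.card_univ]
          simp [Fintype.card_fun]
  have hbdd : BddBelow {y : ℝ | ∃ S : Finset (Fin n),
      fCoeff f S ≠ 0 ∧ y = Real.logb 2 (1 / (fCoeff f S) ^ 2)} := by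
    refine ⟨0, ?_⟩
    rintro y ⟨S, hS, rfl⟩
    refine Real.logb_nonneg one_lt_two ?_
    rw [le_div_iff₀ (pow_two_pos_of_ne_zero hS), one_mul]
    calc (fCoeff f S) ^ 2 ≤ 1 ^ 2 := by
          rw [← sq_abs]
          exact pow_le_pow_left₀ (abs_nonneg _) (habs1 S) 2
      _ = 1 := one_pow 2
  have hmem : Real.logb 2 (1 / (fCoeff f S₀) ^ 2) ∈ {y : ℝ | ∃ S : Finset (Fin n),
      fCoeff f S ≠ 0 ∧ y = Real.logb 2 (1 / (fCoeff f S) ^ 2)} := ⟨S₀, hne, rfl⟩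
  have hstep : fMinEntropy f ≤ Real.logb 2 (1 / (fCoeff f S₀) ^ 2) :=
    csInf_le hbdd hmem
  refine hstep.trans ?_
  have hval : (1:ℝ) / ((2:ℝ) ^ (-r) / 3) ^ 2 = (3 * 2 ^ r) ^ 2 := by
    rw [Real.rpow_neg (by norm_num : (0:ℝ) ≤ 2)]
    field_simp
  have hsq : ((2:ℝ) ^ (-r) / 3) ^ 2 ≤ (fCoeff f S₀) ^ 2 := by
    rw [← sq_abs (fCoeff f S₀)]
    exact pow_le_pow_left₀ hq.le hS₀' 2
  have hle : (1:ℝ) / (fCoeff f S₀) ^ 2 ≤ (3 * 2 ^ r) ^ 2 := by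
    rw [← hval]
    exact div_le_div_of_nonneg_left one_pos.le (by positivity) hsq
  calc Real.logb 2 (1 / (fCoeff f S₀) ^ 2)
      ≤ Real.logb 2 ((3 * 2 ^ r) ^ 2) :=
        Real.logb_le_logb_of_le one_lt_two (by positivity) hle
    _ = 2 * (r + Real.logb 2 3) := by
        rw [Real.logb_pow, Real.logb_mul (by norm_num) h2r.ne',
          Real.logb_rpow two_pos (by norm_num)]
        ring
end

section
/- Let f : {-1,1}^n → {-1,1} and let 𝒞 = {C₁, …, C_t} be an unambiguous ⊕-certificate for f, i.e. a partition of {-1,1}^n into 𝔽₂-affine subspaces such that f is constant on each C_i, where C_i has co-dimension c_i. Then the Fourier entropy satisfies H(f̂²) ≤ 2·Σ_{i=1}^{t} 2^{−c_i}·c_i = 2·aUC^⊕(f,𝒞). In particular, H(f̂²) ≤ 2·aUC^⊕(f), where aUC^⊕(f) is the minimum of aUC^⊕(f,𝒞) over all unambiguous ⊕-certificates 𝒞 for f. -/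
open Finset

lemma bsgn_mul_self (b : Bool) : bsgn b * bsgn b = 1 := by cases b <;> simp [bsgn]

lemma chi_mul_self {n : ℕ} (S : Finset (Fin n)) (x : Fin n → Bool) :
    chi S x * chi S x = 1 := by
  rw [chi, ← Finset.prod_mul_distrib]
  exact Finset.prod_eq_one (fun i _ => bsgn_mul_self _)

lemma chi_eq_ite {n : ℕ} (S : Finset (Fin n)) (x : Fin n → Bool) :
    chi S x = ∏ i : Fin n, (if i ∈ S then bsgn (x i) else 1) := by
  rw [Finset.prod_ite_mem, Finset.univ_inter, chi]

lemma sum_chi {n : ℕ} (S : Finset (Fin n)) :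
    ∑ x : Fin n → Bool, chi S x = if S = ∅ then (2:ℝ)^n else 0 := by
  have h1 : ∑ x : Fin n → Bool, chi S x
      = ∑ x ∈ Fintype.piFinset (fun _ : Fin n => (Finset.univ : Finset Bool)),
          ∏ i : Fin n, (if i ∈ S then bsgn (x i) else 1) := by
    rw [Fintype.piFinset_univ]
    exact Finset.sum_congr rfl (fun x _ => chi_eq_ite S x)
  rw [h1, ← Finset.prod_univ_sum (t := fun _ : Fin n => (Finset.univ : Finset Bool)) (f := fun i b => if i ∈ S then bsgn b else 1)]
  by_cases hS : S = ∅
  · simp [hS]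
  · obtain ⟨i, hi⟩ := Finset.nonempty_iff_ne_empty.2 hS
    rw [if_neg hS]
    apply Finset.prod_eq_zero (Finset.mem_univ i)
    simp [hi, bsgn]

lemma chi_mul_chi {n : ℕ} (S T : Finset (Fin n)) (x : Fin n → Bool) :
    chi S x * chi T x = chi (symmDiff S T) x := by
  rw [chi_eq_ite S, chi_eq_ite T, chi_eq_ite, ← Finset.prod_mul_distrib]
  refine Finset.prod_congr rfl (fun i _ => ?_)
  by_cases hS : i ∈ S <;> by_cases hT : i ∈ T <;>
    simp [hS, hT, Finset.mem_symmDiff, bsgn_mul_self]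

lemma sum_chi_mul_chi {n : ℕ} (S T : Finset (Fin n)) :
    ∑ x : Fin n → Bool, chi S x * chi T x = if S = T then (2:ℝ)^n else 0 := by
  have : ∀ x : Fin n → Bool, chi S x * chi T x = chi (symmDiff S T) x :=
    chi_mul_chi S T
  rw [Finset.sum_congr rfl (fun x _ => this x), sum_chi]
  congr 1
  rw [← Finset.bot_eq_empty, symmDiff_eq_bot]

lemma sum_chi_SS {n : ℕ} (x y : Fin n → Bool) :
    ∑ S : Finset (Fin n), chi S x * chi S y = if x = y then (2:ℝ)^n else 0 := by
  have h1 : ∀ S : Finset (Fin n), chi S x * chi S y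
      = ∏ i ∈ S, (bsgn (x i) * bsgn (y i)) := by
    intro S; rw [chi, chi, ← Finset.prod_mul_distrib]
  have h2 : ∑ S : Finset (Fin n), chi S x * chi S y
      = ∏ i : Fin n, (bsgn (x i) * bsgn (y i) + 1) := by
    rw [Finset.prod_add]
    simp only [Finset.prod_const_one, mul_one]
    rw [← Finset.powerset_univ]
    exact (Finset.sum_congr rfl (fun S _ => h1 S)).trans (by simp)
  rw [h2]
  by_cases hxy : x = y
  · subst hxy
    rw [if_pos rfl]
    rw [Finset.prod_congr rfl (fun i _ => by rw [bsgn_mul_self]; norm_num : ∀ i ∈ univ, bsgn (x i) * bsgn (x i) + 1 = 2)]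
    simp
  · rw [if_neg hxy]
    obtain ⟨i, hi⟩ : ∃ i, x i ≠ y i := by
      by_contra h; push_neg at h; exact hxy (funext h)
    apply Finset.prod_eq_zero (Finset.mem_univ i)
    cases hx : x i <;> cases hy : y i <;> simp_all [bsgn]

lemma parseval {n : ℕ} (u w : (Fin n → Bool) → ℝ) :
    ∑ S : Finset (Fin n), fCoeff u S * fCoeff w S = (∑ x : Fin n → Bool, u x * w x) / 2^n := by
  simp only [fCoeff, div_mul_div_comm]
  rw [← Finset.sum_div]
  have h2n : ((2:ℝ)^n) ≠ 0 := by positivity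
  rw [div_eq_div_iff (by positivity) (by positivity)]
  have : ∀ S : Finset (Fin n),
      (∑ x : Fin n → Bool, u x * chi S x) * ∑ x : Fin n → Bool, w x * chi S x
      = ∑ x : Fin n → Bool, ∑ y : Fin n → Bool, u x * w y * (chi S x * chi S y) := by
    intro S
    rw [Finset.sum_mul_sum]
    exact Finset.sum_congr rfl fun x _ => Finset.sum_congr rfl fun y _ => by ring
  rw [Finset.sum_congr rfl (fun S _ => this S), Finset.sum_comm]
  have : ∀ x : Fin n → Bool,
      ∑ S : Finset (Fin n), ∑ y : Fin n → Bool, u x * w y * (chi S x * chi S y)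
      = ∑ y : Fin n → Bool, u x * w y * (if x = y then (2:ℝ)^n else 0) := by
    intro x
    rw [Finset.sum_comm]
    exact Finset.sum_congr rfl fun y _ => by
      rw [← Finset.mul_sum, sum_chi_SS]
  rw [Finset.sum_congr rfl (fun x _ => this x)]
  simp only [mul_ite, mul_zero, Finset.sum_ite_eq, Finset.mem_univ, if_true]
  rw [← Finset.sum_mul]
  ring

lemma fCoeff_sum {n : ℕ} {ι : Type*} (s : Finset ι) (h : ι → (Fin n → Bool) → ℝ)
    (S : Finset (Fin n)) :
    fCoeff (fun x => ∑ i ∈ s, h i x) S = ∑ i ∈ s, fCoeff (h i) S := by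
  simp only [fCoeff, Finset.sum_mul, ← Finset.sum_div]
  rw [Finset.sum_comm]

lemma fCoeff_smul {n : ℕ} (a : ℝ) (u : (Fin n → Bool) → ℝ) (S : Finset (Fin n)) :
    fCoeff (fun x => a * u x) S = a * fCoeff u S := by
  simp only [fCoeff, mul_assoc, ← Finset.mul_sum, mul_div_assoc]

lemma fCoeff_chi {n : ℕ} (U S : Finset (Fin n)) :
    fCoeff (chi U) S = if U = S then 1 else 0 := by
  rw [fCoeff, sum_chi_mul_chi]
  by_cases h : U = S <;> simp [h]

def suppF {n : ℕ} (w : Fin n → ZMod 2) : Finset (Fin n) :=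
  Finset.univ.filter (fun l => w l = 1)

lemma zmod2_cases (a : ZMod 2) : a = 0 ∨ a = 1 := by revert a; decide

lemma suppF_zero {n : ℕ} : suppF (0 : Fin n → ZMod 2) = ∅ := by
  simp [suppF]

lemma suppF_injective {n : ℕ} : Function.Injective (suppF (n := n)) := by
  intro w w' h
  funext l
  have hl : l ∈ suppF w ↔ l ∈ suppF w' := by rw [h]
  simp only [suppF, Finset.mem_filter, Finset.mem_univ, true_and] at hl
  rcases zmod2_cases (w l) with h1 | h1 <;> rcases zmod2_cases (w' l) with h2 | h2 <;>
    simp_all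

lemma chi_suppF_add {n : ℕ} (w w' : Fin n → ZMod 2) (x : Fin n → Bool) :
    chi (suppF (w + w')) x = chi (suppF w) x * chi (suppF w') x := by
  rw [chi_eq_ite, chi_eq_ite, chi_eq_ite, ← Finset.prod_mul_distrib]
  refine Finset.prod_congr rfl (fun l _ => ?_)
  simp only [suppF, Finset.mem_filter, Finset.mem_univ, true_and, Pi.add_apply]
  rcases zmod2_cases (w l) with h1 | h1 <;> rcases zmod2_cases (w' l) with h2 | h2 <;>
    simp [h1, h2, bsgn_mul_self]
lemma chi_suppF_sum {n c : ℕ} (v : Fin c → Fin n → ZMod 2) (T : Finset (Fin c))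
    (x : Fin n → Bool) :
    chi (suppF (∑ j ∈ T, v j)) x = ∏ j ∈ T, chi (suppF (v j)) x := by
  induction T using Finset.induction_on with
  | empty => simp [suppF_zero, chi]
  | insert _ _ hj ih =>
      rw [Finset.sum_insert hj, Finset.prod_insert hj, chi_suppF_add, ih]

noncomputable def Gfun {n : ℕ} (c : ℕ) (v : Fin c → Fin n → ZMod 2) (b : Fin c → Bool) :
    (Fin n → Bool) → ℝ :=
  fun x => ∏ j, ((1 + bsgn (b j) * chi (suppF (v j)) x) / 2)

lemma chi_pm {n : ℕ} (S : Finset (Fin n)) (x : Fin n → Bool) :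
    chi S x = 1 ∨ chi S x = -1 :=
  mul_self_eq_one_iff.1 (chi_mul_self S x)

lemma bsgn_pm (b : Bool) : bsgn b = 1 ∨ bsgn b = -1 := by cases b <;> simp [bsgn]

lemma Gfun_eq_ite {n : ℕ} (c : ℕ) (v : Fin c → Fin n → ZMod 2) (b : Fin c → Bool)
    (x : Fin n → Bool) :
    Gfun c v b x = if (∀ j, chi (suppF (v j)) x = bsgn (b j)) then 1 else 0 := by
  have hfac : ∀ j, (1 + bsgn (b j) * chi (suppF (v j)) x) / 2
      = if chi (suppF (v j)) x = bsgn (b j) then 1 else 0 := by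
    intro j
    rcases chi_pm (suppF (v j)) x with h | h <;> rcases bsgn_pm (b j) with h' | h' <;>
      rw [h, h'] <;> norm_num
  rw [Gfun, Finset.prod_congr rfl (fun j _ => hfac j), Finset.prod_boole]
  simp

lemma Gfun_expand {n : ℕ} (c : ℕ) (v : Fin c → Fin n → ZMod 2) (b : Fin c → Bool)
    (x : Fin n → Bool) :
    Gfun c v b x = (2:ℝ)^(-(c:ℤ)) *
      ∑ T : Finset (Fin c), (∏ j ∈ T, bsgn (b j)) * chi (suppF (∑ j ∈ T, v j)) x := by
  rw [Gfun]
  rw [Finset.prod_div_distrib, Finset.prod_const]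
  have hexp : ∏ j : Fin c, (1 + bsgn (b j) * chi (suppF (v j)) x)
      = ∑ T : Finset (Fin c), (∏ j ∈ T, bsgn (b j)) * chi (suppF (∑ j ∈ T, v j)) x := by
    have h1 : ∀ j : Fin c, (1 : ℝ) + bsgn (b j) * chi (suppF (v j)) x
        = bsgn (b j) * chi (suppF (v j)) x + 1 := fun j => by ring
    rw [Finset.prod_congr rfl (fun j _ => h1 j), Finset.prod_add]
    simp only [Finset.prod_const_one, mul_one]
    rw [← Finset.powerset_univ]
    refine Finset.sum_congr rfl (fun T _ => ?_)
    rw [Finset.prod_mul_distrib, chi_suppF_sum]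
  rw [hexp, zpow_neg, zpow_natCast, div_eq_inv_mul, Finset.card_univ, Fintype.card_fin]

lemma sumT_injective {n c : ℕ} {v : Fin c → Fin n → ZMod 2}
    (hli : LinearIndependent (ZMod 2) v) {T T' : Finset (Fin c)}
    (h : suppF (∑ j ∈ T, v j) = suppF (∑ j ∈ T', v j)) : T = T' := by
  have hsum : ∑ j ∈ T, v j = ∑ j ∈ T', v j := suppF_injective h
  have hz : ∑ j : Fin c, (((if j ∈ T then 1 else 0) - (if j ∈ T' then 1 else 0) : ZMod 2)) • v j = 0 := by
    have : ∀ (U : Finset (Fin c)),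
        ∑ j : Fin c, ((if j ∈ U then (1:ZMod 2) else 0)) • v j = ∑ j ∈ U, v j := by
      intro U
      rw [Finset.sum_congr rfl (fun j _ => by rw [ite_smul, one_smul, zero_smul] :
        ∀ j ∈ univ, ((if j ∈ U then (1:ZMod 2) else 0)) • v j = if j ∈ U then v j else 0)]
      simp [Finset.sum_ite_mem]
    simp only [sub_smul, Finset.sum_sub_distrib, this, hsum, sub_self]
  have hcoef := Fintype.linearIndependent_iff.1 hli _ hz
  ext j
  have := hcoef j
  by_cases h1 : j ∈ T <;> by_cases h2 : j ∈ T' <;> simp_all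

lemma fCoeff_Gfun_sum {n : ℕ} (c : ℕ) (v : Fin c → Fin n → ZMod 2) (b : Fin c → Bool)
    (S : Finset (Fin n)) :
    fCoeff (Gfun c v b) S = (2:ℝ)^(-(c:ℤ)) *
      ∑ T : Finset (Fin c), (∏ j ∈ T, bsgn (b j)) *
        (if suppF (∑ j ∈ T, v j) = S then 1 else 0) := by
  have h1 : Gfun c v b = fun x => (2:ℝ)^(-(c:ℤ)) *
      ∑ T : Finset (Fin c), (∏ j ∈ T, bsgn (b j)) * chi (suppF (∑ j ∈ T, v j)) x :=
    funext (Gfun_expand c v b)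
  rw [h1, fCoeff_smul]
  congr 1
  rw [fCoeff_sum]
  refine Finset.sum_congr rfl (fun T _ => ?_)
  rw [fCoeff_smul, fCoeff_chi]

lemma fCoeff_Gfun_apply {n : ℕ} {c : ℕ} {v : Fin c → Fin n → ZMod 2}
    (hli : LinearIndependent (ZMod 2) v) (b : Fin c → Bool) (T₀ : Finset (Fin c)) :
    fCoeff (Gfun c v b) (suppF (∑ j ∈ T₀, v j))
      = (2:ℝ)^(-(c:ℤ)) * ∏ j ∈ T₀, bsgn (b j) := by
  rw [fCoeff_Gfun_sum]
  congr 1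
  rw [Finset.sum_eq_single T₀]
  · rw [if_pos rfl, mul_one]
  · intro T _ hT
    rw [if_neg (fun h => hT (sumT_injective hli h)), mul_zero]
  · intro h
    exact absurd (Finset.mem_univ T₀) h

lemma fCoeff_Gfun_empty {n : ℕ} {c : ℕ} {v : Fin c → Fin n → ZMod 2}
    (hli : LinearIndependent (ZMod 2) v) (b : Fin c → Bool) :
    fCoeff (Gfun c v b) ∅ = (2:ℝ)^(-(c:ℤ)) := by
  have := fCoeff_Gfun_apply hli b ∅
  simpa [suppF_zero] using this

lemma fCoeff_Gfun_sq {n : ℕ} {c : ℕ} {v : Fin c → Fin n → ZMod 2}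
    (hli : LinearIndependent (ZMod 2) v) (b : Fin c → Bool) (S : Finset (Fin n))
    (h : fCoeff (Gfun c v b) S ≠ 0) :
    (fCoeff (Gfun c v b) S)^2 = (2:ℝ)^(-(2*(c:ℤ))) := by
  have hex : ∃ T : Finset (Fin c), suppF (∑ j ∈ T, v j) = S := by
    by_contra hno
    push_neg at hno
    apply h
    rw [fCoeff_Gfun_sum]
    rw [Finset.sum_congr rfl (fun T _ => by rw [if_neg (hno T), mul_zero] :
      ∀ T ∈ univ, (∏ j ∈ T, bsgn (b j)) * (if suppF (∑ j ∈ T, v j) = S then 1 else 0) = 0)]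
    simp
  obtain ⟨T₀, hT₀⟩ := hex
  rw [← hT₀, fCoeff_Gfun_apply hli b T₀, mul_pow]
  have hb : (∏ j ∈ T₀, bsgn (b j))^2 = 1 := by
    rw [← Finset.prod_pow]
    exact Finset.prod_eq_one (fun j _ => by rcases bsgn_pm (b j) with h' | h' <;> rw [h'] <;> norm_num)
  rw [hb, mul_one, ← zpow_natCast ((2:ℝ)^(-(c:ℤ))) 2, ← zpow_mul]
  congr 1
  ring



noncomputable def Gf {n t : ℕ} (c : Fin t → ℕ) (v : (i : Fin t) → Fin (c i) → (Fin n → ZMod 2))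
    (b : (i : Fin t) → Fin (c i) → Bool) (i : Fin t) : (Fin n → Bool) → ℝ :=
  Gfun (c i) (v i) (b i)

def SatP {n t : ℕ} {c : Fin t → ℕ} (v : (i : Fin t) → Fin (c i) → (Fin n → ZMod 2))
    (b : (i : Fin t) → Fin (c i) → Bool) (i : Fin t) (x : Fin n → Bool) : Prop :=
  ∀ j, chi (suppF (v i j)) x = bsgn (b i j)

open Classical in
noncomputable def epsF {n t : ℕ} (f : (Fin n → Bool) → ℝ)
    {c : Fin t → ℕ} (v : (i : Fin t) → Fin (c i) → (Fin n → ZMod 2))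
    (b : (i : Fin t) → Fin (c i) → Bool) (i : Fin t) : ℝ :=
  if h : ∃ y : Fin n → Bool, SatP v b i y then f h.choose else 1


section Main
open scoped Classical

variable {n t : ℕ} {f : (Fin n → Bool) → ℝ}
    {c : Fin t → ℕ} {v : (i : Fin t) → Fin (c i) → (Fin n → ZMod 2)}
    {b : (i : Fin t) → Fin (c i) → Bool}

lemma Gf_eq_ite (i : Fin t) (x : Fin n → Bool) :
    Gf c v b i x = if SatP v b i x then 1 else 0 := by
  rw [Gf, Gfun_eq_ite]
  exact if_congr Iff.rfl rfl rfl

lemma Gf_sat {i : Fin t} {x : Fin n → Bool} (h : SatP v b i x) : Gf c v b i x = 1 := by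
  rw [Gf_eq_ite, if_pos h]

lemma Gf_nsat {i : Fin t} {x : Fin n → Bool} (h : ¬ SatP v b i x) : Gf c v b i x = 0 := by
  rw [Gf_eq_ite, if_neg h]

lemma epsF_pm (hf : IsBooleanFunc f) (i : Fin t) :
    epsF f v b i = 1 ∨ epsF f v b i = -1 := by
  rw [epsF]
  split
  · exact hf _
  · exact Or.inl rfl

lemma epsF_mul_self (hf : IsBooleanFunc f) (i : Fin t) :
    epsF f v b i * epsF f v b i = 1 := by
  rcases epsF_pm (v := v) (b := b) hf i with h | h <;> rw [h] <;> norm_num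

lemma epsF_eq (hmono : ∀ i : Fin t, ∀ x y : Fin n → Bool,
      SatP v b i x → SatP v b i y → f x = f y)
    {i : Fin t} {x : Fin n → Bool} (hx : SatP v b i x) : epsF f v b i = f x := by
  rw [epsF, dif_pos ⟨x, hx⟩]
  exact hmono i _ x (Exists.choose_spec (⟨x, hx⟩ : ∃ y, SatP v b i y)) hx

end Main

section Main2
open scoped Classical

variable {n t : ℕ} {f : (Fin n → Bool) → ℝ}
    {c : Fin t → ℕ} {v : (i : Fin t) → Fin (c i) → (Fin n → ZMod 2)}
    {b : (i : Fin t) → Fin (c i) → Bool}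

lemma chi_empty (x : Fin n → Bool) : chi (∅ : Finset (Fin n)) x = 1 :=
  Finset.prod_empty

lemma fCoeff_empty_eq (u : (Fin n → Bool) → ℝ) :
    fCoeff u ∅ = (∑ x : Fin n → Bool, u x) / 2^n := by
  rw [fCoeff]
  congr 1
  exact Finset.sum_congr rfl (fun x _ => by rw [chi_empty, mul_one])

lemma card_cube : (Fintype.card (Fin n → Bool) : ℝ) = 2^n := by
  rw [Fintype.card_fun]
  simp

lemma sum_Gf_eq_one (hpart : ∀ x : Fin n → Bool, ∃! i : Fin t, SatP v b i x)
    (x : Fin n → Bool) : ∑ i : Fin t, Gf c v b i x = 1 := by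
  obtain ⟨i₀, hi₀, hu⟩ := hpart x
  rw [Finset.sum_eq_single i₀]
  · exact Gf_sat hi₀
  · intro i _ hne
    exact Gf_nsat (fun hs => hne (hu i hs))
  · intro h; exact absurd (Finset.mem_univ i₀) h

lemma f_eq_sum (hpart : ∀ x : Fin n → Bool, ∃! i : Fin t, SatP v b i x)
    (hmono : ∀ i : Fin t, ∀ x y : Fin n → Bool,
      SatP v b i x → SatP v b i y → f x = f y)
    (x : Fin n → Bool) : f x = ∑ i : Fin t, epsF f v b i * Gf c v b i x := by
  obtain ⟨i₀, hi₀, hu⟩ := hpart x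
  rw [Finset.sum_eq_single i₀]
  · rw [Gf_sat hi₀, mul_one, epsF_eq hmono hi₀]
  · intro i _ hne
    rw [Gf_nsat (fun hs => hne (hu i hs)), mul_zero]
  · intro h; exact absurd (Finset.mem_univ i₀) h

lemma fCoeff_f_eq (hpart : ∀ x : Fin n → Bool, ∃! i : Fin t, SatP v b i x)
    (hmono : ∀ i : Fin t, ∀ x y : Fin n → Bool,
      SatP v b i x → SatP v b i y → f x = f y)
    (S : Finset (Fin n)) :
    fCoeff f S = ∑ i : Fin t, epsF f v b i * fCoeff (Gf c v b i) S := by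
  have h1 : f = fun x => ∑ i : Fin t, epsF f v b i * Gf c v b i x :=
    funext (f_eq_sum hpart hmono)
  conv_lhs => rw [h1, fCoeff_sum]
  exact Finset.sum_congr rfl (fun i _ => fCoeff_smul _ _ _)

lemma fCoeff_Gf_empty (hli : ∀ i, LinearIndependent (ZMod 2) (v i)) (i : Fin t) :
    fCoeff (Gf c v b i) ∅ = (2:ℝ)^(-(c i : ℤ)) :=
  fCoeff_Gfun_empty (hli i) (b i)

lemma Gf_mul_self (i : Fin t) (x : Fin n → Bool) :
    Gf c v b i x * Gf c v b i x = Gf c v b i x := by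
  rw [Gf_eq_ite]
  split <;> norm_num

lemma sum_sq_fCoeff_Gf (hli : ∀ i, LinearIndependent (ZMod 2) (v i)) (i : Fin t) :
    ∑ S : Finset (Fin n), (fCoeff (Gf c v b i) S)^2 = (2:ℝ)^(-(c i : ℤ)) := by
  have h1 : ∀ S : Finset (Fin n), (fCoeff (Gf c v b i) S)^2
      = fCoeff (Gf c v b i) S * fCoeff (Gf c v b i) S := fun S => sq _
  rw [Finset.sum_congr rfl (fun S _ => h1 S), parseval,
    Finset.sum_congr rfl (fun x _ => Gf_mul_self i x), ← fCoeff_empty_eq,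
    fCoeff_Gf_empty hli i]

lemma sum_two_zpow (hli : ∀ i, LinearIndependent (ZMod 2) (v i))
    (hpart : ∀ x : Fin n → Bool, ∃! i : Fin t, SatP v b i x) :
    ∑ i : Fin t, (2:ℝ)^(-(c i : ℤ)) = 1 := by
  have h1 : ∑ i : Fin t, fCoeff (Gf c v b i) ∅
      = fCoeff (fun x => ∑ i : Fin t, Gf c v b i x) ∅ := (fCoeff_sum _ _ _).symm
  have h2 : (fun x => ∑ i : Fin t, Gf c v b i x) = fun _ : Fin n → Bool => (1:ℝ) :=
    funext (fun x => sum_Gf_eq_one hpart x)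
  have h3 : fCoeff (fun _ : Fin n → Bool => (1:ℝ)) ∅ = 1 := by
    rw [fCoeff_empty_eq]
    rw [Finset.sum_const, Finset.card_univ, nsmul_eq_mul, mul_one]
    rw [div_eq_one_iff_eq (by positivity)]
    exact card_cube
  rw [← Finset.sum_congr rfl (fun i _ => fCoeff_Gf_empty hli i), h1, h2, h3]

lemma sum_p_one (hf : IsBooleanFunc f) :
    ∑ S : Finset (Fin n), (fCoeff f S)^2 = 1 := by
  have h1 : ∀ S : Finset (Fin n), (fCoeff f S)^2 = fCoeff f S * fCoeff f S := fun S => sq _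
  rw [Finset.sum_congr rfl (fun S _ => h1 S), parseval]
  have h2 : ∀ x : Fin n → Bool, f x * f x = 1 := by
    intro x; rcases hf x with h | h <;> rw [h] <;> norm_num
  rw [Finset.sum_congr rfl (fun x _ => h2 x)]
  rw [Finset.sum_const, Finset.card_univ, nsmul_eq_mul, mul_one]
  rw [div_eq_one_iff_eq (by positivity)]
  exact card_cube

end Main2

noncomputable def Ff {n t : ℕ} (f : (Fin n → Bool) → ℝ)
    (c : Fin t → ℕ) (v : (i : Fin t) → Fin (c i) → (Fin n → ZMod 2))
    (b : (i : Fin t) → Fin (c i) → Bool) (k : ℕ) : (Fin n → Bool) → ℝ :=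
  fun x => ∑ i ∈ Finset.univ.filter (fun i => k ≤ c i), epsF f v b i * Gf c v b i x

section Main3
open scoped Classical

variable {n t : ℕ} {f : (Fin n → Bool) → ℝ}
    {c : Fin t → ℕ} {v : (i : Fin t) → Fin (c i) → (Fin n → ZMod 2)}
    {b : (i : Fin t) → Fin (c i) → Bool}

lemma Ff_mul_self (hf : IsBooleanFunc f)
    (hpart : ∀ x : Fin n → Bool, ∃! i : Fin t, SatP v b i x) (k : ℕ) (x : Fin n → Bool) :
    Ff f c v b k x * Ff f c v b k x
      = ∑ i ∈ Finset.univ.filter (fun i => k ≤ c i), Gf c v b i x := by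
  obtain ⟨i₀, hi₀, hu⟩ := hpart x
  by_cases hmem : i₀ ∈ Finset.univ.filter (fun i => k ≤ c i)
  · have h1 : Ff f c v b k x = epsF f v b i₀ := by
      rw [Ff, Finset.sum_eq_single_of_mem i₀ hmem]
      · rw [Gf_sat hi₀, mul_one]
      · intro i _ hne
        rw [Gf_nsat (fun hs => hne (hu i hs)), mul_zero]
    have h2 : ∑ i ∈ Finset.univ.filter (fun i => k ≤ c i), Gf c v b i x = 1 := by
      rw [Finset.sum_eq_single_of_mem i₀ hmem]
      · exact Gf_sat hi₀
      · intro i _ hne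
        exact Gf_nsat (fun hs => hne (hu i hs))
    rw [h1, h2, epsF_mul_self hf]
  · have h1 : Ff f c v b k x = 0 := by
      apply Finset.sum_eq_zero
      intro i hi
      rw [Gf_nsat (fun hs => hmem ((hu i hs) ▸ hi)), mul_zero]
    have h2 : ∑ i ∈ Finset.univ.filter (fun i => k ≤ c i), Gf c v b i x = 0 := by
      apply Finset.sum_eq_zero
      intro i hi
      exact Gf_nsat (fun hs => hmem ((hu i hs) ▸ hi))
    rw [h1, h2, mul_zero]

lemma sum_sq_fCoeff_Ff (hf : IsBooleanFunc f) (hli : ∀ i, LinearIndependent (ZMod 2) (v i))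
    (hpart : ∀ x : Fin n → Bool, ∃! i : Fin t, SatP v b i x) (k : ℕ) :
    ∑ S : Finset (Fin n), (fCoeff (Ff f c v b k) S)^2
      = ∑ i ∈ Finset.univ.filter (fun i => k ≤ c i), (2:ℝ)^(-(c i : ℤ)) := by
  have h1 : ∀ S : Finset (Fin n), (fCoeff (Ff f c v b k) S)^2
      = fCoeff (Ff f c v b k) S * fCoeff (Ff f c v b k) S := fun S => sq _
  rw [Finset.sum_congr rfl (fun S _ => h1 S), parseval,
    Finset.sum_congr rfl (fun x _ => Ff_mul_self hf hpart k x)]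
  rw [Finset.sum_comm, Finset.sum_div]
  refine Finset.sum_congr rfl (fun i _ => ?_)
  rw [← fCoeff_empty_eq, fCoeff_Gf_empty hli i]

lemma fCoeff_Ff_eq (hpart : ∀ x : Fin n → Bool, ∃! i : Fin t, SatP v b i x)
    (hmono : ∀ i : Fin t, ∀ x y : Fin n → Bool,
      SatP v b i x → SatP v b i y → f x = f y)
    (k : ℕ) (S : Finset (Fin n))
    (h : ∀ i : Fin t, fCoeff (Gf c v b i) S ≠ 0 → k ≤ c i) :
    fCoeff (Ff f c v b k) S = fCoeff f S := by
  have h1 : fCoeff (Ff f c v b k) S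
      = ∑ i ∈ Finset.univ.filter (fun i => k ≤ c i), epsF f v b i * fCoeff (Gf c v b i) S := by
    have h0 : fCoeff (Ff f c v b k) S = ∑ i ∈ Finset.univ.filter (fun i => k ≤ c i),
        fCoeff (fun x => epsF f v b i * Gf c v b i x) S :=
      fCoeff_sum (Finset.univ.filter (fun i => k ≤ c i))
        (fun i x => epsF f v b i * Gf c v b i x) S
    rw [h0]
    refine Finset.sum_congr rfl (fun i _ => ?_)
    exact fCoeff_smul (epsF f v b i) (Gf c v b i) S
  rw [h1, fCoeff_f_eq hpart hmono S]
  have h2 : ∀ i ∈ (Finset.univ : Finset (Fin t)),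
      i ∉ Finset.univ.filter (fun i => k ≤ c i) →
      epsF f v b i * fCoeff (Gf c v b i) S = 0 := by
    intro i _ hi
    simp only [Finset.mem_filter, Finset.mem_univ, true_and, not_le] at hi
    by_cases hz : fCoeff (Gf c v b i) S = 0
    · rw [hz, mul_zero]
    · exact absurd (h i hz) (by omega)
  exact Finset.sum_subset (Finset.filter_subset _ _) h2

end Main3


set_option maxHeartbeats 1000000 in
/-- Let `𝒞` be an unambiguous `⊕`-certificate for `f`: a family of
𝔽₂-affine subspaces, the `i`-th given by `c i` linearly independent parity constraints
`∏_{l ∈ supp(v i j)} x_l = b i j`, that partitions `{-1,1}^n` (every point lies in exactly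
one part) and on each of which `f` is constant.  Then
`H(f̂²) ≤ 2 · aUC^⊕(f,𝒞)` where `aUC^⊕(f,𝒞) = Σ_i 2^{-c_i}·c_i`.
(In particular, minimizing over `𝒞`, `H(f̂²) ≤ 2·aUC^⊕(f)`.) -/
theorem stmt7 {n t : ℕ} (f : (Fin n → Bool) → ℝ) (hf : IsBooleanFunc f)
    (c : Fin t → ℕ)
    (v : (i : Fin t) → Fin (c i) → (Fin n → ZMod 2))
    (b : (i : Fin t) → Fin (c i) → Bool)
    (hli : ∀ i, LinearIndependent (ZMod 2) (v i))
    (hpart : ∀ x : Fin n → Bool, ∃! i : Fin t,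
      ∀ j, ∏ l ∈ Finset.univ.filter (fun l => v i j l = 1), bsgn (x l) = bsgn (b i j))
    (hmono : ∀ i : Fin t, ∀ x y : Fin n → Bool,
      (∀ j, ∏ l ∈ Finset.univ.filter (fun l => v i j l = 1), bsgn (x l) = bsgn (b i j)) →
      (∀ j, ∏ l ∈ Finset.univ.filter (fun l => v i j l = 1), bsgn (y l) = bsgn (b i j)) →
      f x = f y) :
    fEntropy f ≤ 2 * ∑ i : Fin t, (2 : ℝ) ^ (-(c i : ℤ)) * (c i : ℝ) := by
  classical
  have hpart' : ∀ x : Fin n → Bool, ∃! i : Fin t, SatP v b i x := hpart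
  have hmono' : ∀ i : Fin t, ∀ x y : Fin n → Bool,
      SatP v b i x → SatP v b i y → f x = f y := hmono
  set M : Finset (Fin n) → ℕ := fun S =>
    if h : (Finset.univ.filter (fun i => fCoeff (Gf c v b i) S ≠ 0)).Nonempty
    then (Finset.univ.filter (fun i => fCoeff (Gf c v b i) S ≠ 0)).inf' h c else 0 with hMdef
  set K : ℕ := Finset.univ.sup c with hKdef
  have hPnn : ∀ S : Finset (Fin n), (0:ℝ) ≤ (fCoeff f S)^2 := fun S => sq_nonneg _
  have hQnn : ∀ S : Finset (Fin n),
      (0:ℝ) ≤ ∑ i : Fin t, (fCoeff (Gf c v b i) S)^2 :=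
    fun S => Finset.sum_nonneg (fun i _ => sq_nonneg _)
  have hP1 : ∑ S : Finset (Fin n), (fCoeff f S)^2 = 1 := sum_p_one hf
  have hQ1 : ∑ S : Finset (Fin n), (∑ i : Fin t, (fCoeff (Gf c v b i) S)^2) = 1 := by
    rw [Finset.sum_comm]
    rw [Finset.sum_congr rfl (fun i _ => sum_sq_fCoeff_Gf hli i)]
    exact sum_two_zpow hli hpart'
  have hex : ∀ S : Finset (Fin n), fCoeff f S ≠ 0 → ∃ i, fCoeff (Gf c v b i) S ≠ 0 := by
    intro S hS
    by_contra hno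
    push_neg at hno
    apply hS
    rw [fCoeff_f_eq hpart' hmono' S]
    exact Finset.sum_eq_zero (fun i _ => by rw [hno i, mul_zero])
  have hQpos : ∀ S : Finset (Fin n), fCoeff f S ≠ 0 →
      (0:ℝ) < ∑ i : Fin t, (fCoeff (Gf c v b i) S)^2 := by
    intro S hS
    obtain ⟨i, hi⟩ := hex S hS
    have h1 : (0:ℝ) < (fCoeff (Gf c v b i) S)^2 := by positivity
    have h2 : (fCoeff (Gf c v b i) S)^2 ≤ ∑ i : Fin t, (fCoeff (Gf c v b i) S)^2 :=
      Finset.single_le_sum (f := fun j => (fCoeff (Gf c v b j) S)^2)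
        (fun j _ => sq_nonneg _) (Finset.mem_univ i)
    linarith
  have hsq_ne : ∀ S : Finset (Fin n), (fCoeff f S)^2 ≠ 0 → fCoeff f S ≠ 0 := by
    intro S h hc
    exact h (by rw [hc]; ring)
  -- step 2 ingredient
  have hQM : ∀ S : Finset (Fin n), fCoeff f S ≠ 0 →
      Real.log (1 / ∑ i : Fin t, (fCoeff (Gf c v b i) S)^2)
        ≤ 2 * (M S : ℝ) * Real.log 2 := by
    intro S hS
    obtain ⟨i, hi⟩ := hex S hS
    have hne : (Finset.univ.filter (fun i => fCoeff (Gf c v b i) S ≠ 0)).Nonempty :=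
      ⟨i, Finset.mem_filter.2 ⟨Finset.mem_univ i, hi⟩⟩
    obtain ⟨i₀, hi₀mem, heq⟩ := Finset.exists_mem_eq_inf' hne c
    have hMS : M S = c i₀ := by simp only [hMdef, dif_pos hne]; exact heq
    have hc0 : fCoeff (Gf c v b i₀) S ≠ 0 := (Finset.mem_filter.1 hi₀mem).2
    have hsq : (fCoeff (Gf c v b i₀) S)^2 = (2:ℝ)^(-(2*(c i₀ : ℤ))) :=
      fCoeff_Gfun_sq (hli i₀) (b i₀) S hc0
    have hq_ge : (2:ℝ)^(-(2*(c i₀ : ℤ))) ≤ ∑ i : Fin t, (fCoeff (Gf c v b i) S)^2 := by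
      rw [← hsq]
      exact Finset.single_le_sum (f := fun j => (fCoeff (Gf c v b j) S)^2)
        (fun j _ => sq_nonneg _) (Finset.mem_univ i₀)
    rw [one_div, Real.log_inv]
    have h1 : Real.log ((2:ℝ)^(-(2*(c i₀ : ℤ)))) ≤
        Real.log (∑ i : Fin t, (fCoeff (Gf c v b i) S)^2) :=
      Real.log_le_log (by positivity) hq_ge
    rw [Real.log_zpow] at h1
    have h2 : ((-(2*(c i₀ : ℤ)) : ℤ) : ℝ) * Real.log 2 = -(2 * (c i₀ : ℝ) * Real.log 2) := by
      push_cast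
      ring
    rw [h2] at h1
    rw [hMS]
    linarith
  have hlog2 : (0:ℝ) < Real.log 2 := Real.log_pos one_lt_two
  -- Gibbs
  have step1 : ∑ S : Finset (Fin n), (fCoeff f S)^2 * Real.log (1 / (fCoeff f S)^2)
      ≤ ∑ S : Finset (Fin n), (fCoeff f S)^2 *
          Real.log (1 / ∑ i : Fin t, (fCoeff (Gf c v b i) S)^2) := by
    have per : ∀ S ∈ (Finset.univ : Finset (Finset (Fin n))),
        (fCoeff f S)^2 * Real.log (1 / (fCoeff f S)^2)
          ≤ (fCoeff f S)^2 * Real.log (1 / ∑ i : Fin t, (fCoeff (Gf c v b i) S)^2)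
            + ((∑ i : Fin t, (fCoeff (Gf c v b i) S)^2) - (fCoeff f S)^2) := by
      intro S _
      by_cases hp : (fCoeff f S)^2 = 0
      · rw [hp]
        simp only [zero_mul, zero_add, sub_zero]
        exact hQnn S
      · have hp0 : (0:ℝ) < (fCoeff f S)^2 := lt_of_le_of_ne (hPnn S) (Ne.symm hp)
        have hq0 : (0:ℝ) < ∑ i : Fin t, (fCoeff (Gf c v b i) S)^2 :=
          hQpos S (hsq_ne S hp)
        rw [one_div, one_div, Real.log_inv, Real.log_inv]
        have hlog : Real.log ((∑ i : Fin t, (fCoeff (Gf c v b i) S)^2) / (fCoeff f S)^2)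
            ≤ (∑ i : Fin t, (fCoeff (Gf c v b i) S)^2) / (fCoeff f S)^2 - 1 :=
          Real.log_le_sub_one_of_pos (div_pos hq0 hp0)
        rw [Real.log_div hq0.ne' hp0.ne'] at hlog
        have h3 : (fCoeff f S)^2 * (Real.log (∑ i : Fin t, (fCoeff (Gf c v b i) S)^2)
              - Real.log ((fCoeff f S)^2))
            ≤ (fCoeff f S)^2 * ((∑ i : Fin t, (fCoeff (Gf c v b i) S)^2) / (fCoeff f S)^2 - 1) :=
          mul_le_mul_of_nonneg_left hlog hp0.le
        have h4 : (fCoeff f S)^2 * ((∑ i : Fin t, (fCoeff (Gf c v b i) S)^2) / (fCoeff f S)^2 - 1)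
            = (∑ i : Fin t, (fCoeff (Gf c v b i) S)^2) - (fCoeff f S)^2 := by
          rw [mul_sub, mul_one, mul_div_assoc', mul_comm, mul_div_assoc, div_self hp, mul_one]
        rw [h4, mul_sub] at h3
        linarith
    calc ∑ S : Finset (Fin n), (fCoeff f S)^2 * Real.log (1 / (fCoeff f S)^2)
        ≤ ∑ S : Finset (Fin n), ((fCoeff f S)^2 *
            Real.log (1 / ∑ i : Fin t, (fCoeff (Gf c v b i) S)^2)
            + ((∑ i : Fin t, (fCoeff (Gf c v b i) S)^2) - (fCoeff f S)^2)) :=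
          Finset.sum_le_sum per
      _ = ∑ S : Finset (Fin n), (fCoeff f S)^2 *
            Real.log (1 / ∑ i : Fin t, (fCoeff (Gf c v b i) S)^2)
          + (∑ S : Finset (Fin n), (∑ i : Fin t, (fCoeff (Gf c v b i) S)^2)
            - ∑ S : Finset (Fin n), (fCoeff f S)^2) := by
          rw [Finset.sum_add_distrib, Finset.sum_sub_distrib]
      _ = ∑ S : Finset (Fin n), (fCoeff f S)^2 *
            Real.log (1 / ∑ i : Fin t, (fCoeff (Gf c v b i) S)^2) := by
          rw [hP1, hQ1]; ring
  have step2 : ∑ S : Finset (Fin n), (fCoeff f S)^2 *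
        Real.log (1 / ∑ i : Fin t, (fCoeff (Gf c v b i) S)^2)
      ≤ ∑ S : Finset (Fin n), (fCoeff f S)^2 * (2 * (M S : ℝ) * Real.log 2) := by
    refine Finset.sum_le_sum (fun S _ => ?_)
    by_cases hp : (fCoeff f S)^2 = 0
    · rw [hp, zero_mul, zero_mul]
    · exact mul_le_mul_of_nonneg_left (hQM S (hsq_ne S hp)) (hPnn S)
  -- level counting
  have hMK : ∀ S, M S ≤ K := by
    intro S
    simp only [hMdef]
    split
    · rename_i h
      obtain ⟨i₀, hi₀mem, heq⟩ := Finset.exists_mem_eq_inf' h c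
      rw [heq]
      exact Finset.le_sup (Finset.mem_univ i₀)
    · exact Nat.zero_le _
  have hcle : ∀ i, c i ≤ K := fun i => Finset.le_sup (Finset.mem_univ i)
  have hMcast : ∀ S, ((M S : ℕ) : ℝ)
      = ∑ k ∈ Finset.Icc 1 K, (if k ≤ M S then (1:ℝ) else 0) := by
    intro S
    rw [Finset.sum_boole]
    have h2 : (Finset.Icc 1 K).filter (fun k => k ≤ M S) = Finset.Icc 1 (M S) := by
      ext k
      simp only [Finset.mem_filter, Finset.mem_Icc]
      have := hMK S
      omega
    rw [h2, Nat.card_Icc]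
    simp
  have hswap : ∑ S : Finset (Fin n), (fCoeff f S)^2 * (M S : ℝ)
      = ∑ k ∈ Finset.Icc 1 K, ∑ S ∈ Finset.univ.filter (fun S => k ≤ M S),
          (fCoeff f S)^2 := by
    rw [Finset.sum_congr rfl (fun S _ => by rw [hMcast S, Finset.mul_sum])]
    rw [Finset.sum_comm]
    refine Finset.sum_congr rfl (fun k _ => ?_)
    rw [Finset.sum_filter]
    exact Finset.sum_congr rfl (fun S _ => by rw [mul_ite, mul_one, mul_zero])
  have hlevel : ∀ k ∈ Finset.Icc 1 K,
      ∑ S ∈ Finset.univ.filter (fun S => k ≤ M S), (fCoeff f S)^2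
        ≤ ∑ i ∈ Finset.univ.filter (fun i => k ≤ c i), (2:ℝ)^(-(c i : ℤ)) := by
    intro k _
    have h1 : ∀ S ∈ Finset.univ.filter (fun S : Finset (Fin n) => k ≤ M S),
        (fCoeff f S)^2 ≤ (fCoeff (Ff f c v b k) S)^2 := by
      intro S hS
      have hkM : k ≤ M S := (Finset.mem_filter.1 hS).2
      by_cases hp : (fCoeff f S)^2 = 0
      · rw [hp]; positivity
      · have hcond : ∀ i : Fin t, fCoeff (Gf c v b i) S ≠ 0 → k ≤ c i := by
          intro i hi
          have hne : (Finset.univ.filter (fun i => fCoeff (Gf c v b i) S ≠ 0)).Nonempty :=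
            ⟨i, Finset.mem_filter.2 ⟨Finset.mem_univ i, hi⟩⟩
          have hM : M S = (Finset.univ.filter
              (fun i => fCoeff (Gf c v b i) S ≠ 0)).inf' hne c := by
            simp only [hMdef, dif_pos hne]
          calc k ≤ M S := hkM
            _ ≤ c i := by
                rw [hM]
                exact Finset.inf'_le c (Finset.mem_filter.2 ⟨Finset.mem_univ i, hi⟩)
        rw [fCoeff_Ff_eq hpart' hmono' k S hcond]
    calc ∑ S ∈ Finset.univ.filter (fun S => k ≤ M S), (fCoeff f S)^2
        ≤ ∑ S ∈ Finset.univ.filter (fun S => k ≤ M S), (fCoeff (Ff f c v b k) S)^2 :=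
          Finset.sum_le_sum h1
      _ ≤ ∑ S : Finset (Fin n), (fCoeff (Ff f c v b k) S)^2 :=
          Finset.sum_le_sum_of_subset_of_nonneg (Finset.filter_subset _ _)
            (fun S _ _ => sq_nonneg _)
      _ = ∑ i ∈ Finset.univ.filter (fun i => k ≤ c i), (2:ℝ)^(-(c i : ℤ)) :=
          sum_sq_fCoeff_Ff hf hli hpart' k
  have hcount : ∑ k ∈ Finset.Icc 1 K, ∑ i ∈ Finset.univ.filter (fun i => k ≤ c i),
      (2:ℝ)^(-(c i : ℤ)) = ∑ i : Fin t, (2:ℝ)^(-(c i : ℤ)) * (c i : ℝ) := by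
    rw [Finset.sum_congr rfl (fun k _ => Finset.sum_filter _ _), Finset.sum_comm]
    refine Finset.sum_congr rfl (fun i _ => ?_)
    rw [← Finset.sum_filter]
    have h2 : (Finset.Icc 1 K).filter (fun k => k ≤ c i) = Finset.Icc 1 (c i) := by
      ext k
      simp only [Finset.mem_filter, Finset.mem_Icc]
      have := hcle i
      omega
    rw [h2, Finset.sum_const, Nat.card_Icc, nsmul_eq_mul]
    rw [mul_comm]
    simp
  have big : ∑ S : Finset (Fin n), (fCoeff f S)^2 * (M S : ℝ)
      ≤ ∑ i : Fin t, (2:ℝ)^(-(c i : ℤ)) * (c i : ℝ) := by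
    rw [hswap, ← hcount]
    exact Finset.sum_le_sum hlevel
  have key : ∑ S : Finset (Fin n), (fCoeff f S)^2 * Real.log (1 / (fCoeff f S)^2)
      ≤ (2 * ∑ i : Fin t, (2:ℝ)^(-(c i : ℤ)) * (c i : ℝ)) * Real.log 2 := by
    have e3 : ∑ S : Finset (Fin n), (fCoeff f S)^2 * (2 * (M S : ℝ) * Real.log 2)
        = (2 * Real.log 2) * ∑ S : Finset (Fin n), (fCoeff f S)^2 * (M S : ℝ) := by
      rw [Finset.mul_sum]
      exact Finset.sum_congr rfl (fun S _ => by ring)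
    have e4 : (2 * Real.log 2) * (∑ S : Finset (Fin n), (fCoeff f S)^2 * (M S : ℝ))
        ≤ (2 * Real.log 2) * ∑ i : Fin t, (2:ℝ)^(-(c i : ℤ)) * (c i : ℝ) :=
      mul_le_mul_of_nonneg_left big (by positivity)
    calc ∑ S : Finset (Fin n), (fCoeff f S)^2 * Real.log (1 / (fCoeff f S)^2)
        ≤ ∑ S : Finset (Fin n), (fCoeff f S)^2 *
            Real.log (1 / ∑ i : Fin t, (fCoeff (Gf c v b i) S)^2) := step1
      _ ≤ ∑ S : Finset (Fin n), (fCoeff f S)^2 * (2 * (M S : ℝ) * Real.log 2) := step2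
      _ = (2 * Real.log 2) * ∑ S : Finset (Fin n), (fCoeff f S)^2 * (M S : ℝ) := e3
      _ ≤ (2 * Real.log 2) * ∑ i : Fin t, (2:ℝ)^(-(c i : ℤ)) * (c i : ℝ) := e4
      _ = (2 * ∑ i : Fin t, (2:ℝ)^(-(c i : ℤ)) * (c i : ℝ)) * Real.log 2 := by ring
  have hent : fEntropy f
      = (∑ S : Finset (Fin n), (fCoeff f S)^2 * Real.log (1 / (fCoeff f S)^2)) / Real.log 2 := by
    unfold fEntropy
    rw [Finset.sum_div]
    refine Finset.sum_congr rfl (fun S _ => ?_)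
    rw [Real.logb, mul_div_assoc]
  rw [hent, div_le_iff₀ hlog2]
  exact key
end
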